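/- Under the MIMO discrete-time adaptive law setup, for every t ∈ ℕ, V(t+1) − V(t) ≤ −α₁ ε(t)ᵀε(t)/m(t)², where α₁ = 2 − max{λ_max(K_p S_p), λ_max(Γ)} > 0 and λ_max denotes the largest eigenvalue of a symmetric matrix. In particular V is nonincreasing. -/

import Mathlib

open Matrix BigOperators

private lemma trace_mul_vecMulVec {n p : Type*} [Fintype n] [Fintype p]
    (A : Matrix n p ℝ) (u : p → ℝ) (v : n → ℝ) :
    Matrix.trace (A * Matrix.vecMulVec u v) = v ⬝ᵥ A.mulVec u := by
  simp only [Matrix.trace, Matrix.diag, Matrix.mul_apply, Matrix.vecMulVec_apply,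
    dotProduct, Matrix.mulVec, Finset.mul_sum]
  exact Finset.sum_congr rfl fun i _ => Finset.sum_congr rfl fun j _ => by ring

private lemma vecMulVec_mul_left {n p q : Type*} [Fintype p] [Fintype q]
    (u : n → ℝ) (v : p → ℝ) (A : Matrix p q ℝ) :
    Matrix.vecMulVec u v * A = Matrix.vecMulVec u (Aᵀ.mulVec v) := by
  ext i j
  simp only [Matrix.mul_apply, Matrix.vecMulVec_apply, Matrix.mulVec, dotProduct,
    Matrix.transpose_apply, Finset.mul_sum]
  exact Finset.sum_congr rfl fun k _ => by ring

private lemma transpose_vecMulVec {n p : Type*} (u : n → ℝ) (v : p → ℝ) :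
    (Matrix.vecMulVec u v)ᵀ = Matrix.vecMulVec v u := by
  ext i j; simp [Matrix.vecMulVec_apply, mul_comm]

private lemma vecMulVec_mulVec {n p : Type*} [Fintype p]
    (u : n → ℝ) (v : p → ℝ) (w : p → ℝ) :
    (Matrix.vecMulVec u v).mulVec w = (v ⬝ᵥ w) • u := by
  ext i
  simp only [Matrix.mulVec, Matrix.vecMulVec_apply, dotProduct, Pi.smul_apply, smul_eq_mul,
    Finset.sum_mul, Finset.mul_sum]
  exact Finset.sum_congr rfl fun k _ => by ring

private lemma rayleigh_le {M : ℕ} (hM : 0 < M) {A : Matrix (Fin M) (Fin M) ℝ}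
    (hA : A.IsHermitian) (x : Fin M → ℝ) :
    x ⬝ᵥ A.mulVec x ≤ (⨆ i, hA.eigenvalues i) * (x ⬝ᵥ x) := by
  haveI : Nonempty (Fin M) := ⟨⟨0, hM⟩⟩
  classical
  set U : Matrix (Fin M) (Fin M) ℝ := (hA.eigenvectorUnitary : Matrix (Fin M) (Fin M) ℝ) with hU
  have hUU : U * star U = 1 := Matrix.mem_unitaryGroup_iff.mp hA.eigenvectorUnitary.2
  set c : Fin M → ℝ := (star U).mulVec x with hcdef
  have hdiag : A = U * Matrix.diagonal hA.eigenvalues * star U := by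
    have h := hA.spectral_theorem
    simpa using h
  have hxU : x ᵥ* U = c := by
    rw [hcdef, Matrix.star_eq_conjTranspose, Matrix.conjTranspose_eq_transpose_of_trivial,
      Matrix.mulVec_transpose]
  have h1 : x ⬝ᵥ A.mulVec x = ∑ i, hA.eigenvalues i * (c i * c i) := by
    conv_lhs => rw [hdiag]
    rw [← Matrix.mulVec_mulVec, ← Matrix.mulVec_mulVec, Matrix.dotProduct_mulVec, hxU]
    simp only [dotProduct, Matrix.mulVec_diagonal, ← hcdef]
    exact Finset.sum_congr rfl fun i _ => by ring
  have h2 : x ⬝ᵥ x = ∑ i, c i * c i := by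
    have : c ⬝ᵥ c = x ⬝ᵥ x := by
      calc c ⬝ᵥ c = (x ᵥ* U) ⬝ᵥ (star U *ᵥ x) := by rw [hxU]
        _ = x ⬝ᵥ (U *ᵥ (star U *ᵥ x)) := (Matrix.dotProduct_mulVec _ _ _).symm
        _ = x ⬝ᵥ x := by rw [Matrix.mulVec_mulVec, hUU, Matrix.one_mulVec]
    rw [← this]; rfl
  rw [h1, h2, Finset.mul_sum]
  refine Finset.sum_le_sum fun i _ => ?_
  exact mul_le_mul_of_nonneg_right
    (le_ciSup (Set.Finite.bddAbove (Set.finite_range _)) i) (mul_self_nonneg _)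

private lemma sup_lt_two {M : ℕ} (hM : 0 < M) {A : Matrix (Fin M) (Fin M) ℝ}
    (hA : A.IsHermitian)
    (h2 : ∀ x : Fin M → ℝ, x ≠ 0 → (∑ i, x i * (A.mulVec x) i) < 2 * ∑ i, x i * x i) :
    (⨆ i, hA.eigenvalues i) < 2 := by
  haveI : Nonempty (Fin M) := ⟨⟨0, hM⟩⟩
  have hlt : ∀ i, hA.eigenvalues i < 2 := by
    intro i
    set v : Fin M → ℝ := ⇑(hA.eigenvectorBasis i) with hv
    have hv0 : v ≠ 0 := by
      intro h
      exact hA.eigenvectorBasis.orthonormal.ne_zero i (by ext j; exact congrFun h j)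
    have hAv : A.mulVec v = hA.eigenvalues i • v := hA.mulVec_eigenvectorBasis i
    have hlt' := h2 v hv0
    rw [hAv] at hlt'
    simp only [Pi.smul_apply, smul_eq_mul] at hlt'
    have hvv : 0 < ∑ j, v j * v j := by
      obtain ⟨j, hj⟩ := Function.ne_iff.mp hv0
      exact Finset.sum_pos' (fun k _ => mul_self_nonneg _)
        ⟨j, Finset.mem_univ j, mul_self_pos.mpr hj⟩
    have : hA.eigenvalues i * (∑ j, v j * v j) < 2 * ∑ j, v j * v j := by
      calc hA.eigenvalues i * (∑ j, v j * v j) = ∑ j, v j * (hA.eigenvalues i * v j) := by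
            rw [Finset.mul_sum]; exact Finset.sum_congr rfl fun j _ => by ring
        _ < 2 * ∑ j, v j * v j := hlt'
    exact lt_of_mul_lt_mul_right this hvv.le
  obtain ⟨i₀, hi₀⟩ := Finite.exists_max hA.eigenvalues
  exact lt_of_le_of_lt (ciSup_le hi₀) (hlt i₀)
private lemma expandL {n p : Type*} [Fintype n] [Fintype p]
    (a : ℝ) (P Z : Matrix n p ℝ) (G : Matrix p p ℝ) :
    Matrix.trace ((P - a • Z) * G * (P - a • Z)ᵀ) =
      Matrix.trace (P * G * Pᵀ) - a * Matrix.trace (P * G * Zᵀ)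
      - a * Matrix.trace (Z * G * Pᵀ) + a ^ 2 * Matrix.trace (Z * G * Zᵀ) := by
  simp only [Matrix.sub_mul, Matrix.mul_sub, Matrix.transpose_sub, Matrix.transpose_smul,
    Matrix.smul_mul, Matrix.mul_smul, Matrix.trace_sub, Matrix.trace_smul, smul_smul,
    smul_eq_mul]
  ring

private lemma expandR {n p : Type*} [Fintype n] [Fintype p]
    (a : ℝ) (P Z : Matrix n p ℝ) (G : Matrix n n ℝ) :
    Matrix.trace ((P - a • Z)ᵀ * G * (P - a • Z)) =
      Matrix.trace (Pᵀ * G * P) - a * Matrix.trace (Pᵀ * G * Z)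
      - a * Matrix.trace (Zᵀ * G * P) + a ^ 2 * Matrix.trace (Zᵀ * G * Z) := by
  simp only [Matrix.sub_mul, Matrix.mul_sub, Matrix.transpose_sub, Matrix.transpose_smul,
    Matrix.smul_mul, Matrix.mul_smul, Matrix.trace_sub, Matrix.trace_smul, smul_smul,
    smul_eq_mul]
  ring

/-- MIMO discrete-time adaptive laws: Lyapunov decrement bound
`V(t+1) − V(t) ≤ −α₁ εᵀε/m²` with `α₁ = 2 − max{λ_max(K_p S_p), λ_max(Γ)} > 0`;
in particular `V` is nonincreasing. -/
theorem mimo_discrete_lyapunov_decrement_bound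
    (N M : ℕ) (hN : 0 < N) (hM : 0 < M)
    (ζ : ℕ → Fin N → ℝ) (ξ : ℕ → Fin M → ℝ)
    (m : ℕ → ℝ)
    (hm : ∀ t, m t = Real.sqrt (1 + (∑ i, ζ t i * ζ t i) + ∑ j, ξ t j * ξ t j))
    (Kp Sp : Matrix (Fin M) (Fin M) ℝ) (hSp : IsUnit Sp.det)
    (hKS : (Kp * Sp).PosDef)
    (hKS2 : ∀ x : Fin M → ℝ, x ≠ 0 →
      (∑ i, x i * ((Kp * Sp).mulVec x) i) < 2 * ∑ i, x i * x i)
    (Γ : Matrix (Fin M) (Fin M) ℝ) (hΓ : Γ.PosDef)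
    (hΓ2 : ∀ x : Fin M → ℝ, x ≠ 0 →
      (∑ i, x i * (Γ.mulVec x) i) < 2 * ∑ i, x i * x i)
    (Θs : Matrix (Fin N) (Fin M) ℝ)
    (Θ : ℕ → Matrix (Fin N) (Fin M) ℝ) (Ψ : ℕ → Matrix (Fin M) (Fin M) ℝ)
    (ε : ℕ → Fin M → ℝ)
    (hε : ∀ t, ε t = Kp.mulVec ((Θ t - Θs)ᵀ.mulVec (ζ t)) + (Ψ t - Kp).mulVec (ξ t))
    (hΘlaw : ∀ t, (Θ (t + 1))ᵀ =
      (Θ t)ᵀ - (m t ^ 2)⁻¹ • Matrix.vecMulVec (Sp.mulVec (ε t)) (ζ t))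
    (hΨlaw : ∀ t, Ψ (t + 1) =
      Ψ t - (m t ^ 2)⁻¹ • Matrix.vecMulVec (Γ.mulVec (ε t)) (ξ t))
    (V : ℕ → ℝ)
    (hV : ∀ t, V t = Matrix.trace ((Θ t - Θs) * (Kpᵀ * Sp⁻¹) * (Θ t - Θs)ᵀ)
        + Matrix.trace ((Ψ t - Kp)ᵀ * Γ⁻¹ * (Ψ t - Kp))) :
    0 < 2 - max (⨆ i, hKS.1.eigenvalues i) (⨆ i, hΓ.1.eigenvalues i) ∧
    (∀ t, V (t + 1) - V t ≤
      -(2 - max (⨆ i, hKS.1.eigenvalues i) (⨆ i, hΓ.1.eigenvalues i))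
        * ((∑ j, ε t j * ε t j) / m t ^ 2)) ∧
    ∀ t, V (t + 1) ≤ V t := by
  haveI : Nonempty (Fin M) := ⟨⟨0, hM⟩⟩
  classical
  set lam : ℝ := max (⨆ i, hKS.1.eigenvalues i) (⨆ i, hΓ.1.eigenvalues i) with hlam
  have hlam2 : lam < 2 := max_lt (sup_lt_two hM hKS.1 hKS2) (sup_lt_two hM hΓ.1 hΓ2)
  have hlam0 : 0 < lam := by
    have h1 : 0 < hKS.1.eigenvalues ⟨0, hM⟩ := hKS.eigenvalues_pos ⟨0, hM⟩
    have h2 : hKS.1.eigenvalues ⟨0, hM⟩ ≤ ⨆ i, hKS.1.eigenvalues i :=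
      le_ciSup (Set.Finite.bddAbove (Set.finite_range _)) _
    exact lt_of_lt_of_le (lt_of_lt_of_le h1 h2) (le_max_left _ _)
  have hα : 0 < 2 - lam := by linarith
  have hΓdet : IsUnit Γ.det := isUnit_iff_ne_zero.2 hΓ.det_pos.ne'
  have hsymKS : (Kp * Sp)ᵀ = Kp * Sp := by
    have h := hKS.1
    rwa [Matrix.IsHermitian, Matrix.conjTranspose_eq_transpose_of_trivial] at h
  have hsymΓ : Γᵀ = Γ := by
    have h := hΓ.1
    rwa [Matrix.IsHermitian, Matrix.conjTranspose_eq_transpose_of_trivial] at h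
  have hmsq : ∀ t, m t ^ 2 = 1 + (∑ i, ζ t i * ζ t i) + ∑ j, ξ t j * ξ t j := by
    intro t
    have h1 : (0:ℝ) ≤ ∑ i, ζ t i * ζ t i := Finset.sum_nonneg fun i _ => mul_self_nonneg _
    have h2 : (0:ℝ) ≤ ∑ j, ξ t j * ξ t j := Finset.sum_nonneg fun j _ => mul_self_nonneg _
    rw [hm, sq, Real.mul_self_sqrt (by linarith)]
  have hmpos : ∀ t, 0 < m t ^ 2 := by
    intro t
    have h1 : (0:ℝ) ≤ ∑ i, ζ t i * ζ t i := Finset.sum_nonneg fun i _ => mul_self_nonneg _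
    have h2 : (0:ℝ) ≤ ∑ j, ξ t j * ξ t j := Finset.sum_nonneg fun j _ => mul_self_nonneg _
    rw [hmsq t]; linarith
  -- main decrement identity
  have key : ∀ t, V (t + 1) - V t =
      -2 * (m t ^ 2)⁻¹ * (ε t ⬝ᵥ ε t)
      + ((m t ^ 2)⁻¹) ^ 2 * ((ε t ⬝ᵥ (Kp * Sp).mulVec (ε t)) * (ζ t ⬝ᵥ ζ t)
          + (ε t ⬝ᵥ Γ.mulVec (ε t)) * (ξ t ⬝ᵥ ξ t)) := by
    intro t
    set a : ℝ := (m t ^ 2)⁻¹ with ha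
    set e : Fin M → ℝ := ε t with he
    set Φ : Matrix (Fin N) (Fin M) ℝ := Θ t - Θs with hΦ
    set Q : Matrix (Fin M) (Fin M) ℝ := Ψ t - Kp with hQ
    set G : Matrix (Fin M) (Fin M) ℝ := Kpᵀ * Sp⁻¹ with hG
    set u : Fin M → ℝ := Sp.mulVec e with hu
    set w : Fin M → ℝ := Γ.mulVec e with hw
    set e1 : Fin M → ℝ := Kp.mulVec (Φᵀ.mulVec (ζ t)) with he1
    set e2 : Fin M → ℝ := Q.mulVec (ξ t) with he2
    have hGu : G.mulVec u = Kpᵀ.mulVec e := by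
      rw [hu, Matrix.mulVec_mulVec, hG, Matrix.mul_assoc, Matrix.nonsing_inv_mul _ hSp,
        Matrix.mul_one]
    have hGtu : Gᵀ.mulVec u = Kpᵀ.mulVec e := by
      have hmat : Gᵀ * Sp = Kpᵀ := by
        rw [hG, Matrix.transpose_mul, Matrix.transpose_transpose, Matrix.mul_assoc, ← hsymKS,
          Matrix.transpose_mul, ← Matrix.mul_assoc, ← Matrix.transpose_mul,
          Matrix.mul_nonsing_inv _ hSp, Matrix.transpose_one, Matrix.one_mul]
      rw [hu, Matrix.mulVec_mulVec, hmat]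
    have hWw : Γ⁻¹.mulVec w = e := by
      rw [hw, Matrix.mulVec_mulVec, Matrix.nonsing_inv_mul _ hΓdet, Matrix.one_mulVec]
    have hWtw : (Γ⁻¹)ᵀ.mulVec w = e := by
      rw [Matrix.transpose_nonsing_inv, hsymΓ, hWw]
    have hΦ1 : Θ (t + 1) - Θs = Φ - a • Matrix.vecMulVec (ζ t) u := by
      have h := congrArg Matrix.transpose (hΘlaw t)
      rw [Matrix.transpose_transpose, Matrix.transpose_sub, Matrix.transpose_transpose,
        Matrix.transpose_smul, transpose_vecMulVec] at h
      rw [h, hΦ, sub_right_comm]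
    have hQ1 : Ψ (t + 1) - Kp = Q - a • Matrix.vecMulVec w (ξ t) := by
      rw [hΨlaw t, hQ, sub_right_comm]
    have TA : Matrix.trace (Φ * G * (Matrix.vecMulVec (ζ t) u)ᵀ) = e ⬝ᵥ e1 := by
      rw [transpose_vecMulVec, trace_mul_vecMulVec, ← Matrix.mulVec_mulVec, hGu,
        Matrix.mulVec_mulVec, Matrix.dotProduct_mulVec, ← Matrix.mulVec_transpose,
        Matrix.transpose_mul, Matrix.transpose_transpose, ← Matrix.mulVec_mulVec, ← he1,
        dotProduct_comm]
    have TB : Matrix.trace (Matrix.vecMulVec (ζ t) u * G * Φᵀ) = e ⬝ᵥ e1 := by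
      rw [vecMulVec_mul_left, hGtu, Matrix.trace_mul_comm, trace_mul_vecMulVec,
        Matrix.mulVec_transpose, ← Matrix.dotProduct_mulVec, ← he1]
    have TC : Matrix.trace (Matrix.vecMulVec (ζ t) u * G * (Matrix.vecMulVec (ζ t) u)ᵀ)
        = (e ⬝ᵥ (Kp * Sp).mulVec e) * (ζ t ⬝ᵥ ζ t) := by
      rw [transpose_vecMulVec, vecMulVec_mul_left, hGtu, trace_mul_vecMulVec,
        _root_.vecMulVec_mulVec, dotProduct_smul, smul_eq_mul, Matrix.mulVec_transpose,
        ← Matrix.dotProduct_mulVec, hu, Matrix.mulVec_mulVec]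
    have TD : Matrix.trace (Qᵀ * Γ⁻¹ * Matrix.vecMulVec w (ξ t)) = e ⬝ᵥ e2 := by
      rw [trace_mul_vecMulVec, ← Matrix.mulVec_mulVec, hWw, Matrix.mulVec_transpose,
        dotProduct_comm, ← Matrix.dotProduct_mulVec, ← he2]
    have TE : Matrix.trace ((Matrix.vecMulVec w (ξ t))ᵀ * Γ⁻¹ * Q) = e ⬝ᵥ e2 := by
      rw [_root_.transpose_vecMulVec, vecMulVec_mul_left, hWtw, Matrix.trace_mul_comm,
        trace_mul_vecMulVec, ← he2]
    have TF : Matrix.trace ((Matrix.vecMulVec w (ξ t))ᵀ * Γ⁻¹ * Matrix.vecMulVec w (ξ t))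
        = (e ⬝ᵥ Γ.mulVec e) * (ξ t ⬝ᵥ ξ t) := by
      rw [_root_.transpose_vecMulVec, vecMulVec_mul_left, hWtw, trace_mul_vecMulVec,
        _root_.vecMulVec_mulVec, dotProduct_smul, smul_eq_mul, hw]
    have hesum : e = e1 + e2 := by
      rw [he1, he2, hΦ, hQ, he]; exact hε t
    have hee : e ⬝ᵥ e1 + e ⬝ᵥ e2 = e ⬝ᵥ e := by
      rw [← dotProduct_add, ← hesum]
    rw [hV (t + 1), hV t, hΦ1, hQ1, expandL, expandR, TA, TB, TC, TD, TE, TF]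
    linear_combination (-2 * a) * hee
  -- the decrement inequality
  have H2 : ∀ t, V (t + 1) - V t ≤ -(2 - lam) * ((∑ j, ε t j * ε t j) / m t ^ 2) := by
    intro t
    have hsum : (∑ j, ε t j * ε t j) = ε t ⬝ᵥ ε t := rfl
    set s : ℝ := ε t ⬝ᵥ ε t with hs'
    set z : ℝ := ζ t ⬝ᵥ ζ t with hz'
    set y : ℝ := ξ t ⬝ᵥ ξ t with hy'
    set a : ℝ := (m t ^ 2)⁻¹ with ha'
    have hs : 0 ≤ s := Finset.sum_nonneg fun i _ => mul_self_nonneg _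
    have hz : 0 ≤ z := Finset.sum_nonneg fun i _ => mul_self_nonneg _
    have hy : 0 ≤ y := Finset.sum_nonneg fun i _ => mul_self_nonneg _
    have ha : 0 < a := inv_pos.2 (hmpos t)
    have hq1 : ε t ⬝ᵥ (Kp * Sp).mulVec (ε t) ≤ lam * s := by
      calc ε t ⬝ᵥ (Kp * Sp).mulVec (ε t)
          ≤ (⨆ i, hKS.1.eigenvalues i) * s := rayleigh_le hM hKS.1 (ε t)
        _ ≤ lam * s := by
            apply mul_le_mul_of_nonneg_right _ hs
            rw [hlam]; exact le_max_left _ _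
    have hq2 : ε t ⬝ᵥ Γ.mulVec (ε t) ≤ lam * s := by
      calc ε t ⬝ᵥ Γ.mulVec (ε t)
          ≤ (⨆ i, hΓ.1.eigenvalues i) * s := rayleigh_le hM hΓ.1 (ε t)
        _ ≤ lam * s := by
            apply mul_le_mul_of_nonneg_right _ hs
            rw [hlam]; exact le_max_right _ _
    have hzy : a * (z + y) = 1 - a := by
      have h1 : a * (m t ^ 2) = 1 := inv_mul_cancel₀ (hmpos t).ne'
      have h2 : m t ^ 2 = 1 + z + y := hmsq t
      rw [h2] at h1
      linear_combination h1
    have step1 : a ^ 2 * ((ε t ⬝ᵥ (Kp * Sp).mulVec (ε t)) * z + (ε t ⬝ᵥ Γ.mulVec (ε t)) * y)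
        ≤ a ^ 2 * ((lam * s) * z + (lam * s) * y) := by
      apply mul_le_mul_of_nonneg_left _ (sq_nonneg a)
      exact add_le_add (mul_le_mul_of_nonneg_right hq1 hz) (mul_le_mul_of_nonneg_right hq2 hy)
    have step3 : a ^ 2 * ((lam * s) * z + (lam * s) * y) ≤ lam * s * a := by
      have h0 : 0 ≤ lam * s := mul_nonneg hlam0.le hs
      have h1 : a * (z + y) ≤ 1 := by linarith
      calc a ^ 2 * ((lam * s) * z + (lam * s) * y) = (lam * s) * (a * (z + y)) * a := by ring
        _ ≤ (lam * s) * 1 * a :=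
            mul_le_mul_of_nonneg_right (mul_le_mul_of_nonneg_left h1 h0) ha.le
        _ = lam * s * a := by ring
    rw [key t, hsum, div_eq_mul_inv, ← hs', ← ha']
    have : -(2 - lam) * (s * a) = -2 * a * s + lam * s * a := by ring
    rw [this]
    linarith
  refine ⟨hα, H2, fun t => ?_⟩
  have h := H2 t
  have hnn : 0 ≤ (∑ j, ε t j * ε t j) / m t ^ 2 :=
    div_nonneg (Finset.sum_nonneg fun i _ => mul_self_nonneg _) (sq_nonneg _)
  nlinarith [mul_nonneg hα.le hnn]
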